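/- Let G'=(V',E') be a directed graph without self-loops in which every node has in-degree 2 and out-degree 2, and such that for every ordered pair of distinct nodes u,v there exist two edge-disjoint directed paths from u to v. Let e ∈ E' and let F be a frame for e. Define y^{(e)} ∈ ℝ^{E'} by y^{(e)}_e = 0, y^{(e)}_{e'} = 1 for e' ∈ F, and y^{(e)}_{e'} = 1/2 for all remaining edges e'. Then y^{(e)} ∈ AT_bal(G'). -/

import Mathlib

open Finset

namespace TSPGap


/-! ### Lovász–Schrijver lift-and-project operators -/

/-- `cone(R) = {(λ, λx) : λ ≥ 0, x ∈ R}`, with the extra 0th coordinate first. -/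
def lsCone {ι : Type*} (R : Set (ι → ℝ)) : Set (ℝ × (ι → ℝ)) :=
  {p | ∃ c : ℝ, ∃ y ∈ R, 0 ≤ c ∧ p.1 = c ∧ p.2 = fun i => c * y i}

/-- `X` is a protection matrix witnessing `x ∈ N(R)`: it is symmetric, its 0th row and
diagonal both equal `(1, x)`, and each row `X_i` and difference `X_0 - X_i` lies in `cone(R)`. -/
def IsProtection {ι : Type*} (R : Set (ι → ℝ)) (x : ι → ℝ)
    (X : Option ι → Option ι → ℝ) : Prop :=
  (∀ i j, X i j = X j i) ∧
  X none none = 1 ∧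
  (∀ i, X none (some i) = x i) ∧
  (∀ i, X (some i) (some i) = x i) ∧
  (∀ i, (X (some i) none, fun j => X (some i) (some j)) ∈ lsCone R) ∧
  (∀ i, (X none none - X (some i) none,
         fun j => X none (some j) - X (some i) (some j)) ∈ lsCone R)

/-- The Lovász–Schrijver `N` operator. -/
def lsN {ι : Type*} (R : Set (ι → ℝ)) : Set (ι → ℝ) :=
  {x | ∃ X : Option ι → Option ι → ℝ, IsProtection R x X}

/-- The Lovász–Schrijver `N₊` operator (protection matrix additionally PSD). -/
def lsNplus {ι : Type*} [Fintype ι] (R : Set (ι → ℝ)) : Set (ι → ℝ) :=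
  {x | ∃ X : Matrix (Option ι) (Option ι) ℝ, X.PosSemidef ∧
        IsProtection R x (fun i j => X i j)}

/-! ### Directed graphs -/

variable {V : Type*} [DecidableEq V]

/-- The list of (directed) steps of a walk given by its list of vertices. -/
def dSteps (l : List V) : List (V × V) := l.zip l.tail

/-- The steps of a closed walk given by its list of vertices. -/
def cycSteps (l : List V) : List (V × V) := l.zip (l.rotate 1)

/-- `l` is a directed walk from `u` to `v` using edges of `E`. -/
def IsDWalk (E : Finset (V × V)) (u v : V) (l : List V) : Prop :=
  l.head? = some u ∧ l.getLast? = some v ∧ ∀ a ∈ dSteps l, a ∈ E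

/-- Total weight of a walk. -/
def dWalkWeight (w : V × V → ℝ) (l : List V) : ℝ := ((dSteps l).map w).sum

/-- Shortest-path distance from `u` to `v` in the weighted directed graph `(E, w)`. -/
noncomputable def dDist (E : Finset (V × V)) (w : V × V → ℝ) (u v : V) : ℝ :=
  sInf {c | ∃ l : List V, IsDWalk E u v l ∧ dWalkWeight w l = c}

/-- `x(δ⁺(S))`. -/
def outCut (E : Finset (V × V)) (x : ↥E → ℝ) (S : Finset V) : ℝ :=
  ∑ e ∈ E.attach.filter (fun e => e.val.1 ∈ S ∧ e.val.2 ∉ S), x e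

/-- `x(δ⁻(S))`. -/
def inCut (E : Finset (V × V)) (x : ↥E → ℝ) (S : Finset V) : ℝ :=
  ∑ e ∈ E.attach.filter (fun e => e.val.1 ∉ S ∧ e.val.2 ∈ S), x e

/-- `d · x = ∑_e d_e x_e` over the edge set `E`. -/
def dDot (E : Finset (V × V)) (d : V × V → ℝ) (x : ↥E → ℝ) : ℝ :=
  ∑ e ∈ E.attach, d e.val * x e

/-- The balanced asymmetric tour polytope of the directed graph with node set `VS`
and edge set `E`. -/
def ATbal (VS : Finset V) (E : Finset (V × V)) : Set (↥E → ℝ) :=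
  {x | (∀ e, 0 ≤ x e ∧ x e ≤ 1) ∧
       (∀ S : Finset V, S ⊆ VS → S.Nonempty → S ≠ VS →
          1 ≤ outCut E x S ∧ 1 ≤ inCut E x S) ∧
       (∀ v ∈ VS, outCut E x {v} = inCut E x {v})}

/-- Indicator vectors of Hamiltonian cycles (on node set `VS`) among edges `E`. -/
def hamCycleVecs (VS : Finset V) (E : Finset (V × V)) : Set (↥E → ℝ) :=
  {x | ∃ c : List V, 2 ≤ c.length ∧ c.Nodup ∧ c.toFinset = VS ∧
        (∀ a ∈ cycSteps c, a ∈ E) ∧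
        ∀ e : ↥E, x e = if e.val ∈ cycSteps c then 1 else 0}

/-- Edge set of the complete directed graph on the node set `VS` (no self-loops). -/
def dComplete (VS : Finset V) : Finset (V × V) := (VS ×ˢ VS).filter (fun e => e.1 ≠ e.2)

/-- Edge set of the complete directed graph on all of `V` (no self-loops). -/
def dCompleteAll (V : Type*) [Fintype V] [DecidableEq V] : Finset (V × V) :=
  Finset.univ.filter (fun e => e.1 ≠ e.2)

/-- Out-degree of `v` in edge set `E`. -/
def outDeg (E : Finset (V × V)) (v : V) : ℕ := (E.filter (fun e => e.1 = v)).card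

/-- In-degree of `v` in edge set `E`. -/
def inDeg (E : Finset (V × V)) (v : V) : ℕ := (E.filter (fun e => e.2 = v)).card

/-- A frame for the edge `e = (u,v)`: a set `F ⊆ E \ {e}` consisting of an edge-simple
path from `u` to `v` together with zero or more edge-simple cycles, all pairwise
edge-disjoint. -/
def IsFrame (E : Finset (V × V)) (e : V × V) (F : Finset (V × V)) : Prop :=
  F ⊆ E.erase e ∧
  ∃ (p : List V) (cs : List (List V)),
    p.head? = some e.1 ∧ p.getLast? = some e.2 ∧ (∀ a ∈ dSteps p, a ∈ E) ∧
    (∀ c ∈ cs, c ≠ [] ∧ ∀ a ∈ cycSteps c, a ∈ E) ∧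
    (dSteps p ++ (cs.map cycSteps).flatten).Nodup ∧
    F = (dSteps p ++ (cs.map cycSteps).flatten).toFinset

/-- There exist two edge-disjoint directed (simple) paths from `u` to `v` in `E`. -/
def TwoEdgeDisjointPaths (E : Finset (V × V)) (u v : V) : Prop :=
  ∃ p q : List V, p.Nodup ∧ q.Nodup ∧
    p.head? = some u ∧ p.getLast? = some v ∧
    q.head? = some u ∧ q.getLast? = some v ∧
    (∀ a ∈ dSteps p, a ∈ E) ∧ (∀ a ∈ dSteps q, a ∈ E) ∧
    (dSteps p).Disjoint (dSteps q)




/-! ### The Charikar–Goemans–Karloff graphs -/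

/-- Vertex type housing the graph `G_{k,r}` (index `k = 0` is a dummy level). -/
def CGKV : ℕ → Type
  | 0 => PUnit
  | 1 => ℕ
  | k + 2 => (ℕ × CGKV (k + 1)) ⊕ Fin 2

instance CGKV.decEq : (k : ℕ) → DecidableEq (CGKV k)
  | 0 => inferInstanceAs (DecidableEq PUnit)
  | 1 => inferInstanceAs (DecidableEq ℕ)
  | k + 2 =>
      letI : DecidableEq (CGKV (k + 1)) := CGKV.decEq (k + 1)
      inferInstanceAs (DecidableEq ((ℕ × CGKV (k + 1)) ⊕ Fin 2))

/-- The source of `G_{k,r}`. -/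
def CGKsrc (r : ℕ) : (k : ℕ) → CGKV k
  | 0 => PUnit.unit
  | 1 => (0 : ℕ)
  | _ + 2 => Sum.inr 0

/-- The sink of `G_{k,r}`. -/
def CGKsnk (r : ℕ) : (k : ℕ) → CGKV k
  | 0 => PUnit.unit
  | 1 => (r + 1 : ℕ)
  | _ + 2 => Sum.inr 1

/-- The node set of `G_{k,r}`. -/
def CGKVS (r : ℕ) : (k : ℕ) → Finset (CGKV k)
  | 0 => ∅
  | 1 => Finset.range (r + 2)
  | k + 2 =>
      ((Finset.range r) ×ˢ CGKVS r (k + 1)).image Sum.inl ∪ {Sum.inr 0, Sum.inr 1}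

/-- The edge set of `G_{k,r}`: at level 1, two oppositely-directed paths of `r+1` edges
on the nodes `0, …, r+1`; at level `k+2`, the edges of the `r` copies of `G_{k+1,r}`
together with a path from the source `s` through the copies' sources to the sink `t`,
and a path from `t` through the copies' sinks (in the opposite order) back to `s`. -/
def CGKE (r : ℕ) : (k : ℕ) → Finset (CGKV k × CGKV k)
  | 0 => ∅
  | 1 => (dSteps (List.range (r + 2))).toFinset ∪
         (dSteps (List.range (r + 2)).reverse).toFinset
  | k + 2 =>
      (Finset.range r).biUnion
        (fun j => (CGKE r (k + 1)).image (fun e => (Sum.inl (j, e.1), Sum.inl (j, e.2)))) ∪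
      (dSteps (Sum.inr 0 ::
        ((List.range r).map (fun j => Sum.inl (j, CGKsrc r (k + 1)))) ++ [Sum.inr 1])).toFinset ∪
      (dSteps (Sum.inr 1 ::
        (((List.range r).map (fun j => Sum.inl (j, CGKsnk r (k + 1)))).reverse) ++ [Sum.inr 0])).toFinset

/-- Edge weights of `G_{k,r}` (and of `L_{k,r}`): level-`ℓ` edges have weight `r^(ℓ-1)`. -/
def CGKw (r : ℕ) : (k : ℕ) → CGKV k × CGKV k → ℝ
  | 0, _ => 0
  | 1, _ => 1
  | k + 2, e =>
      match e with
      | (Sum.inl (j, u), Sum.inl (j', v)) =>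
          if j = j' then CGKw r (k + 1) (u, v) else (r : ℝ) ^ (k + 1)
      | _ => (r : ℝ) ^ (k + 1)

/-- `v₁`: the successor of `s` on the forward path of `G_{k,r}`. -/
def Lv1 (r : ℕ) : (k : ℕ) → CGKV k
  | 0 => PUnit.unit
  | 1 => (1 : ℕ)
  | k + 2 => Sum.inl (0, CGKsrc r (k + 1))

/-- `v₂`: the predecessor of `t` on the forward path of `G_{k,r}`. -/
def Lv2 (r : ℕ) : (k : ℕ) → CGKV k
  | 0 => PUnit.unit
  | 1 => (r : ℕ)
  | k + 2 => Sum.inl (r - 1, CGKsrc r (k + 1))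

/-- `v₃`: the successor of `t` on the backward path of `G_{k,r}`. -/
def Lv3 (r : ℕ) : (k : ℕ) → CGKV k
  | 0 => PUnit.unit
  | 1 => (r : ℕ)
  | k + 2 => Sum.inl (r - 1, CGKsnk r (k + 1))

/-- `v₄`: the predecessor of `s` on the backward path of `G_{k,r}`. -/
def Lv4 (r : ℕ) : (k : ℕ) → CGKV k
  | 0 => PUnit.unit
  | 1 => (1 : ℕ)
  | k + 2 => Sum.inl (0, CGKsnk r (k + 1))

/-- The node set `V_{k,r}` of `L_{k,r}`: the nodes of `G_{k,r}` minus the two terminals. -/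
def LVS (r k : ℕ) : Finset (CGKV k) :=
  ((CGKVS r k).erase (CGKsrc r k)).erase (CGKsnk r k)

/-- The edge set `E_{k,r}` of `L_{k,r}`: the edges of `G_{k,r}` not incident to a terminal,
plus the two new edges `(v₂,v₁)` and `(v₄,v₃)`. -/
def LE (r k : ℕ) : Finset (CGKV k × CGKV k) :=
  (CGKE r k).filter (fun e =>
    e.1 ≠ CGKsrc r k ∧ e.1 ≠ CGKsnk r k ∧ e.2 ≠ CGKsrc r k ∧ e.2 ≠ CGKsnk r k) ∪
  {(Lv2 r k, Lv1 r k), (Lv4 r k, Lv3 r k)}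



/-! ### Undirected graphs -/

variable {V : Type*} [DecidableEq V]

/-- The (undirected) steps of a walk given by its list of vertices. -/
def uSteps (l : List V) : List (Sym2 V) := (l.zip l.tail).map (fun p => s(p.1, p.2))

/-- `l` is a walk from `u` to `v` in the undirected edge set `E`. -/
def IsUWalk (E : Finset (Sym2 V)) (u v : V) (l : List V) : Prop :=
  l.head? = some u ∧ l.getLast? = some v ∧ ∀ e ∈ uSteps l, e ∈ E

/-- Whether the undirected edge `e` crosses the cut `(S, S̄)`. -/
def uCrosses (S : Finset V) (e : Sym2 V) : Bool :=
  Sym2.lift ⟨fun a b => xor (decide (a ∈ S)) (decide (b ∈ S)),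
    fun a b => Bool.xor_comm _ _⟩ e

/-- `x(δ(S))`. -/
def uCut (E : Finset (Sym2 V)) (x : ↥E → ℝ) (S : Finset V) : ℝ :=
  ∑ e ∈ E.attach.filter (fun e => uCrosses S e.val), x e

/-- `d · x = ∑_e d_e x_e` over the undirected edge set `E`. -/
def uDot (E : Finset (Sym2 V)) (d : Sym2 V → ℝ) (x : ↥E → ℝ) : ℝ :=
  ∑ e ∈ E.attach, d e.val * x e

/-- The symmetric tour polytope of the undirected graph with node set `VS`, edges `E`. -/
def STpoly (VS : Finset V) (E : Finset (Sym2 V)) : Set (↥E → ℝ) :=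
  {x | (∀ e, 0 ≤ x e ∧ x e ≤ 1) ∧
       (∀ S : Finset V, S ⊆ VS → S.Nonempty → S ≠ VS → 2 ≤ uCut E x S) ∧
       (∀ v ∈ VS, uCut E x {v} = 2)}

/-- The symmetric path polytope of the undirected graph with node set `VS`, edges `E`,
and endpoints `s`, `t`. -/
def SPpoly (VS : Finset V) (E : Finset (Sym2 V)) (s t : V) : Set (↥E → ℝ) :=
  {x | (∀ e, 0 ≤ x e ∧ x e ≤ 1) ∧
       (∀ S : Finset V, S ⊆ VS → S.Nonempty → S ≠ VS →
          (((s ∈ S) ↔ (t ∈ S)) → 2 ≤ uCut E x S) ∧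
          (¬((s ∈ S) ↔ (t ∈ S)) → 1 ≤ uCut E x S)) ∧
       (∀ v ∈ VS, v ≠ s → v ≠ t → uCut E x {v} = 2) ∧
       uCut E x {s} = 1 ∧ uCut E x {t} = 1}

/-- Indicator vectors of Hamiltonian paths from `s` to `t` (on node set `VS`) among
edges `E`. -/
def uHamPathVecs (VS : Finset V) (E : Finset (Sym2 V)) (s t : V) : Set (↥E → ℝ) :=
  {x | ∃ p : List V, p.Nodup ∧ p.toFinset = VS ∧
        p.head? = some s ∧ p.getLast? = some t ∧
        (∀ e ∈ uSteps p, e ∈ E) ∧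
        ∀ e : ↥E, x e = if e.val ∈ uSteps p then 1 else 0}

/-- Edge set of the complete undirected graph on all of `V` (no self-loops). -/
def uCompleteAll (V : Type*) [Fintype V] [DecidableEq V] : Finset (Sym2 V) :=
  Finset.univ.filter (fun e => ¬ e.IsDiag)

/-- Shortest-path distance (number of edges) between the endpoints of `e`, in the
unweighted undirected graph with edge set `E`. -/
noncomputable def uDist (E : Finset (Sym2 V)) (e : Sym2 V) : ℝ :=
  sInf {c | ∃ u v : V, e = s(u, v) ∧
    ∃ l : List V, IsUWalk E u v l ∧ ((uSteps l).length : ℝ) = c}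

/-! ### Cheung's graphs -/

/-- The node set `V_{ℓ,q}` of Cheung's graph `G_{ℓ,q}`: a top path and a bottom path of
`ℓ+1` nodes each, a left and a right clique of `3q+3` nodes each, and nodes `s`, `t`. -/
inductive ChV (l q : ℕ) where
  | top : Fin (l + 1) → ChV l q
  | bot : Fin (l + 1) → ChV l q
  | left : Fin (3 * q + 3) → ChV l q
  | right : Fin (3 * q + 3) → ChV l q
  | vs : ChV l q
  | vt : ChV l q
deriving DecidableEq, Fintype

/-- The edges of the two paths of `G_{ℓ,q}`. -/
def ChEpaths (l q : ℕ) : Finset (Sym2 (ChV l q)) :=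
  (Finset.univ : Finset (Fin l)).image
    (fun i => s(ChV.top i.castSucc, ChV.top i.succ)) ∪
  (Finset.univ : Finset (Fin l)).image
    (fun i => s(ChV.bot i.castSucc, ChV.bot i.succ))

/-- The edges within the two cliques of `G_{ℓ,q}`. -/
def ChEcliques (l q : ℕ) : Finset (Sym2 (ChV l q)) :=
  ((Finset.univ : Finset (Fin (3 * q + 3) × Fin (3 * q + 3))).filter
      (fun p => p.1 ≠ p.2)).image (fun p => s(ChV.left p.1, ChV.left p.2)) ∪
  ((Finset.univ : Finset (Fin (3 * q + 3) × Fin (3 * q + 3))).filter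
      (fun p => p.1 ≠ p.2)).image (fun p => s(ChV.right p.1, ChV.right p.2))

/-- The connection edges of `G_{ℓ,q}`: path endpoints to the cliques, `s` to the left
clique, and `t` to the right clique. -/
def ChEconn (l q : ℕ) : Finset (Sym2 (ChV l q)) :=
  (Finset.univ : Finset (Fin (3 * q + 3))).image (fun i => s(ChV.top 0, ChV.left i)) ∪
  (Finset.univ : Finset (Fin (3 * q + 3))).image (fun i => s(ChV.bot 0, ChV.left i)) ∪
  (Finset.univ : Finset (Fin (3 * q + 3))).image
    (fun i => s(ChV.top (Fin.last l), ChV.right i)) ∪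
  (Finset.univ : Finset (Fin (3 * q + 3))).image
    (fun i => s(ChV.bot (Fin.last l), ChV.right i)) ∪
  (Finset.univ : Finset (Fin (3 * q + 3))).image (fun i => s(ChV.vs, ChV.left i)) ∪
  (Finset.univ : Finset (Fin (3 * q + 3))).image (fun i => s(ChV.vt, ChV.right i))

/-- The edge set `E_{ℓ,q}` of Cheung's graph `G_{ℓ,q}`. -/
def ChE (l q : ℕ) : Finset (Sym2 (ChV l q)) :=
  ChEpaths l q ∪ ChEcliques l q ∪ ChEconn l q

/-- The node set of `G'_{ℓ,q}`: `G_{ℓ,q}` plus `ℓ-1` new internal path nodes. -/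
inductive ChV' (l q : ℕ) where
  | old : ChV l q → ChV' l q
  | mid : Fin (l - 1) → ChV' l q
deriving DecidableEq, Fintype

/-- The new `s`–`t` path of `G'_{ℓ,q}` (as a list of nodes; it has `ℓ` edges). -/
def ChPathList (l q : ℕ) : List (ChV' l q) :=
  ChV'.old ChV.vs :: ((List.finRange (l - 1)).map ChV'.mid ++ [ChV'.old ChV.vt])

/-- The edge set `E'_{ℓ,q}` of `G'_{ℓ,q}`: the (old) edges of `G_{ℓ,q}` together with the
`ℓ` new edges of a path from `s` to `t` through `ℓ-1` new nodes. -/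
def ChE' (l q : ℕ) : Finset (Sym2 (ChV' l q)) :=
  (ChE l q).image (Sym2.map ChV'.old) ∪ (uSteps (ChPathList l q)).toFinset


section Stmt7Aux

variable {V : Type*} [DecidableEq V]

lemma stmt7_dSteps_cons_cons (a b : V) (t : List V) :
    dSteps (a :: b :: t) = (a, b) :: dSteps (b :: t) := rfl

/-- A walk from inside `P` to outside `P` has a crossing step. -/
lemma stmt7_cross (P : V → Prop) :
    ∀ (l : List V) (a b : V), l.head? = some a → l.getLast? = some b →
      P a → ¬ P b → ∃ s ∈ dSteps l, P s.1 ∧ ¬ P s.2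
  | [], a, b, ha, _, _, _ => by simp at ha
  | [x], a, b, ha, hb, hPa, hPb => by
      simp only [List.head?_cons, Option.some.injEq] at ha
      simp only [List.getLast?_singleton, Option.some.injEq] at hb
      subst ha; subst hb; exact absurd hPa hPb
  | x :: y :: t, a, b, ha, hb, hPa, hPb => by
      simp only [List.head?_cons, Option.some.injEq] at ha
      subst ha
      rw [List.getLast?_cons_cons] at hb
      by_cases hy : P y
      · obtain ⟨s, hs, h1, h2⟩ := stmt7_cross P (y :: t) y b rfl hb hy hPb
        exact ⟨s, by rw [stmt7_dSteps_cons_cons]; exact List.mem_cons_of_mem _ hs, h1, h2⟩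
      · exact ⟨(x, y), by rw [stmt7_dSteps_cons_cons]; exact List.mem_cons_self, hPa, hy⟩

/-- Out-steps minus in-steps at `w` along a walk from `a` to `b`. -/
lemma stmt7_pathCount (w : V) :
    ∀ (l : List V) (a b : V), l.head? = some a → l.getLast? = some b →
      (dSteps l).countP (fun s => decide (s.1 = w)) + (if b = w then 1 else 0)
        = (dSteps l).countP (fun s => decide (s.2 = w)) + (if a = w then 1 else 0)
  | [], a, b, ha, _ => by simp at ha
  | [x], a, b, ha, hb => by
      simp only [List.head?_cons, Option.some.injEq] at ha
      simp only [List.getLast?_singleton, Option.some.injEq] at hb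
      subst ha; subst hb
      simp [dSteps]
  | x :: y :: t, a, b, ha, hb => by
      simp only [List.head?_cons, Option.some.injEq] at ha
      subst ha
      rw [List.getLast?_cons_cons] at hb
      have ih := stmt7_pathCount w (y :: t) y b rfl hb
      rw [stmt7_dSteps_cons_cons, List.countP_cons, List.countP_cons]
      by_cases hx : x = w <;> by_cases hy : y = w <;> by_cases hbw : b = w <;>
        simp [hx, hy, hbw] at ih ⊢ <;> omega

/-- Along a cycle, out-steps at `w` equal in-steps at `w`. -/
lemma stmt7_cycCount (w : V) (c : List V) :
    (cycSteps c).countP (fun s => decide (s.1 = w))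
      = (cycSteps c).countP (fun s => decide (s.2 = w)) := by
  have hlen : c.length ≤ (c.rotate 1).length := by simp
  have h1 : (c.zip (c.rotate 1)).map Prod.fst = c := List.map_fst_zip hlen
  have h2 : (c.zip (c.rotate 1)).map Prod.snd = c.rotate 1 :=
    List.map_snd_zip (by simp)
  have e1 : (cycSteps c).countP (fun s => decide (s.1 = w))
      = c.countP (fun x => decide (x = w)) := by
    conv_rhs => rw [← h1]
    rw [List.countP_map]
    rfl
  have e2 : (cycSteps c).countP (fun s => decide (s.2 = w))
      = (c.rotate 1).countP (fun x => decide (x = w)) := by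
    conv_rhs => rw [← h2]
    rw [List.countP_map]
    rfl
  rw [e1, e2, (List.rotate_perm c 1).countP_eq]

lemma stmt7_card_filter_toFinset {α : Type*} [DecidableEq α]
    (p : α → Prop) [DecidablePred p] :
    ∀ (L : List α), L.Nodup →
      (L.toFinset.filter p).card = L.countP (fun a => decide (p a))
  | [], _ => by simp
  | a :: t, h => by
      rw [List.nodup_cons] at h
      rw [List.toFinset_cons, Finset.filter_insert, List.countP_cons]
      by_cases hp : p a
      · rw [if_pos hp, Finset.card_insert_of_notMem
          (fun hmem => h.1 (List.mem_toFinset.mp (Finset.mem_of_mem_filter a hmem)))]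
        rw [stmt7_card_filter_toFinset p t h.2]
        simp [hp]
      · rw [if_neg hp, stmt7_card_filter_toFinset p t h.2]
        simp [hp]

lemma stmt7_outCut_eq (E : Finset (V × V)) (yv : V × V → ℝ) (S : Finset V) :
    outCut E (fun e => yv e.val) S
      = ∑ a ∈ E.filter (fun a => a.1 ∈ S ∧ a.2 ∉ S), yv a := by
  rw [outCut, Finset.sum_filter]
  conv_rhs => rw [Finset.sum_filter]
  exact Finset.sum_attach E (fun a => if a.1 ∈ S ∧ a.2 ∉ S then yv a else 0)

lemma stmt7_inCut_eq (E : Finset (V × V)) (yv : V × V → ℝ) (S : Finset V) :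
    inCut E (fun e => yv e.val) S
      = ∑ a ∈ E.filter (fun a => a.1 ∉ S ∧ a.2 ∈ S), yv a := by
  rw [inCut, Finset.sum_filter]
  conv_rhs => rw [Finset.sum_filter]
  exact Finset.sum_attach E (fun a => if a.1 ∉ S ∧ a.2 ∈ S then yv a else 0)

lemma stmt7_key_sum (E F : Finset (V × V)) (e : V × V) (hFE : F ⊆ E) (heF : e ∉ F)
    (he : e ∈ E) (p : V × V → Prop) [DecidablePred p] :
    ∑ a ∈ E.filter p, (if a = e then (0:ℝ) else if a ∈ F then 1 else 1/2)
      = ((E.filter p).card : ℝ) * (1/2) + ((F.filter p).card : ℝ) * (1/2)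
        - (if p e then 1/2 else 0) := by
  have hdecomp : ∀ a ∈ E.filter p,
      (if a = e then (0:ℝ) else if a ∈ F then 1 else 1/2)
        = 1/2 + (if a ∈ F then (1/2:ℝ) else 0) - (if a = e then (1/2:ℝ) else 0) := by
    intro a _
    by_cases h1 : a = e
    · subst h1; simp [heF]
    · by_cases h2 : a ∈ F <;> simp [h1, h2] <;> norm_num
  rw [Finset.sum_congr rfl hdecomp, Finset.sum_sub_distrib, Finset.sum_add_distrib]
  congr 1
  · congr 1
    · rw [Finset.sum_const, nsmul_eq_mul]
    · rw [← Finset.sum_filter, Finset.sum_const, nsmul_eq_mul]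
      have hswap : (E.filter p).filter (fun a => a ∈ F) = F.filter p := by
        ext a
        simp only [Finset.mem_filter]
        exact ⟨fun ⟨⟨_, hp⟩, hf⟩ => ⟨hf, hp⟩, fun ⟨hf, hp⟩ => ⟨⟨hFE hf, hp⟩, hf⟩⟩
      rw [hswap]
  · rw [Finset.sum_ite_eq' (E.filter p) e (fun _ => (1/2:ℝ))]
    simp [Finset.mem_filter, he]

end Stmt7Aux

theorem stmt7 {V : Type*} [Fintype V] [DecidableEq V] (E : Finset (V × V))
    (hloop : ∀ e ∈ E, e.1 ≠ e.2)
    (hdeg : ∀ v : V, outDeg E v = 2 ∧ inDeg E v = 2)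
    (hpaths : ∀ u v : V, u ≠ v → TwoEdgeDisjointPaths E u v)
    (e : V × V) (he : e ∈ E) (F : Finset (V × V)) (hF : IsFrame E e F) :
    (fun e' : ↥E => if e'.val = e then (0 : ℝ)
                    else if e'.val ∈ F then 1 else 1 / 2)
      ∈ ATbal Finset.univ E := by
  classical
  obtain ⟨hFsub, pl, cs, hhead, hlast, hpE, hcyc, hnodup, hFeq⟩ := hF
  have hFE : F ⊆ E := hFsub.trans (Finset.erase_subset _ _)
  have hne' : ∀ f ∈ F, f ≠ e := fun f hf => (Finset.mem_erase.mp (hFsub hf)).1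
  have heF : e ∉ F := fun h => hne' e h rfl
  set g : V × V → ℝ := fun a => if a = e then (0:ℝ) else if a ∈ F then 1 else 1/2
    with hg
  have hshow : (fun e' : ↥E => if e'.val = e then (0:ℝ)
      else if e'.val ∈ F then 1 else 1/2) = (fun e' : ↥E => g e'.val) := by
    funext e'; simp only [hg]
  rw [hshow]
  have hg_nonneg : ∀ f, 0 ≤ g f := by
    intro f; simp only [hg]; split_ifs <;> norm_num
  have hg_one : ∀ f ∈ F, g f = 1 := by
    intro f hf; simp only [hg]; rw [if_neg (hne' f hf), if_pos hf]
  have hg_half : ∀ f, f ≠ e → (1/2:ℝ) ≤ g f := by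
    intro f hf; simp only [hg]; rw [if_neg hf]; split_ifs <;> norm_num
  refine ⟨?_, ?_, ?_⟩
  · intro f
    refine ⟨hg_nonneg f.val, ?_⟩
    simp only [hg]; split_ifs <;> norm_num
  · -- cut constraints
    intro S _ hSne hSuniv
    obtain ⟨a, haS⟩ := hSne
    obtain ⟨b, hbS⟩ : ∃ b, b ∉ S := by
      by_contra h
      push_neg at h
      exact hSuniv (Finset.eq_univ_iff_forall.mpr h)
    constructor
    · rw [stmt7_outCut_eq]
      by_cases hcr : e.1 ∈ S ∧ e.2 ∉ S
      · obtain ⟨s, hs, h1, h2⟩ :=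
          stmt7_cross (· ∈ S) pl e.1 e.2 hhead hlast hcr.1 hcr.2
        have hsF : s ∈ F := by
          rw [hFeq, List.mem_toFinset]
          exact List.mem_append_left _ hs
        calc (1:ℝ) = g s := (hg_one s hsF).symm
          _ ≤ _ := Finset.single_le_sum (fun f _ => hg_nonneg f)
              (Finset.mem_filter.mpr ⟨hpE s hs, h1, h2⟩)
      · obtain ⟨p, q, _, _, hph, hpl', hqh, hql', hpE', hqE', hdisj⟩ :=
          hpaths a b (fun h => hbS (h ▸ haS))
        obtain ⟨f1, hf1, h11, h12⟩ := stmt7_cross (· ∈ S) p a b hph hpl' haS hbS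
        obtain ⟨f2, hf2, h21, h22⟩ := stmt7_cross (· ∈ S) q a b hqh hql' haS hbS
        have hf12 : f1 ≠ f2 := fun h => hdisj hf1 (by rw [h]; exact hf2)
        have hmem : ({f1, f2} : Finset (V × V)) ⊆
            E.filter (fun a => a.1 ∈ S ∧ a.2 ∉ S) := by
          intro x hx
          rcases Finset.mem_insert.mp hx with rfl | hx
          · exact Finset.mem_filter.mpr ⟨hpE' _ hf1, h11, h12⟩
          · rw [Finset.mem_singleton] at hx; subst hx
            exact Finset.mem_filter.mpr ⟨hqE' _ hf2, h21, h22⟩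
        have hge1 : (1/2:ℝ) ≤ g f1 :=
          hg_half f1 (fun h => hcr (by rw [← h]; exact ⟨h11, h12⟩))
        have hge2 : (1/2:ℝ) ≤ g f2 :=
          hg_half f2 (fun h => hcr (by rw [← h]; exact ⟨h21, h22⟩))
        calc (1:ℝ) = 1/2 + 1/2 := by norm_num
          _ ≤ g f1 + g f2 := add_le_add hge1 hge2
          _ = ∑ x ∈ ({f1, f2} : Finset (V × V)), g x := (Finset.sum_pair hf12).symm
          _ ≤ _ := Finset.sum_le_sum_of_subset_of_nonneg hmem
              (fun x _ _ => hg_nonneg x)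
    · rw [stmt7_inCut_eq]
      by_cases hcr : e.1 ∉ S ∧ e.2 ∈ S
      · obtain ⟨s, hs, h1, h2⟩ :=
          stmt7_cross (· ∉ S) pl e.1 e.2 hhead hlast hcr.1 (not_not_intro hcr.2)
        have hsF : s ∈ F := by
          rw [hFeq, List.mem_toFinset]
          exact List.mem_append_left _ hs
        calc (1:ℝ) = g s := (hg_one s hsF).symm
          _ ≤ _ := Finset.single_le_sum (fun f _ => hg_nonneg f)
              (Finset.mem_filter.mpr ⟨hpE s hs, h1, not_not.mp h2⟩)
      · obtain ⟨p, q, _, _, hph, hpl', hqh, hql', hpE', hqE', hdisj⟩ :=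
          hpaths b a (fun h => hbS (h.symm ▸ haS))
        obtain ⟨f1, hf1, h11, h12⟩ :=
          stmt7_cross (· ∉ S) p b a hph hpl' hbS (not_not_intro haS)
        obtain ⟨f2, hf2, h21, h22⟩ :=
          stmt7_cross (· ∉ S) q b a hqh hql' hbS (not_not_intro haS)
        have hf12 : f1 ≠ f2 := fun h => hdisj hf1 (by rw [h]; exact hf2)
        have hmem : ({f1, f2} : Finset (V × V)) ⊆
            E.filter (fun a => a.1 ∉ S ∧ a.2 ∈ S) := by
          intro x hx
          rcases Finset.mem_insert.mp hx with rfl | hx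
          · exact Finset.mem_filter.mpr ⟨hpE' _ hf1, h11, not_not.mp h12⟩
          · rw [Finset.mem_singleton] at hx; subst hx
            exact Finset.mem_filter.mpr ⟨hqE' _ hf2, h21, not_not.mp h22⟩
        have hge1 : (1/2:ℝ) ≤ g f1 :=
          hg_half f1 (fun h => hcr (by rw [← h]; exact ⟨h11, not_not.mp h12⟩))
        have hge2 : (1/2:ℝ) ≤ g f2 :=
          hg_half f2 (fun h => hcr (by rw [← h]; exact ⟨h21, not_not.mp h22⟩))
        calc (1:ℝ) = 1/2 + 1/2 := by norm_num
          _ ≤ g f1 + g f2 := add_le_add hge1 hge2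
          _ = ∑ x ∈ ({f1, f2} : Finset (V × V)), g x := (Finset.sum_pair hf12).symm
          _ ≤ _ := Finset.sum_le_sum_of_subset_of_nonneg hmem
              (fun x _ _ => hg_nonneg x)
  · -- balance
    intro w _
    rw [stmt7_outCut_eq, stmt7_inCut_eq]
    simp only [hg]
    rw [stmt7_key_sum E F e hFE heF he, stmt7_key_sum E F e hFE heF he]
    -- simplify the filter predicates
    have houtp : ∀ (a : V × V), a ∈ E →
        ((a.1 ∈ ({w} : Finset V) ∧ a.2 ∉ ({w} : Finset V)) ↔ a.1 = w) := by
      intro a ha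
      simp only [Finset.mem_singleton]
      exact ⟨fun h => h.1, fun h => ⟨h, fun h2 => hloop a ha (h.trans h2.symm)⟩⟩
    have hinp : ∀ (a : V × V), a ∈ E →
        ((a.1 ∉ ({w} : Finset V) ∧ a.2 ∈ ({w} : Finset V)) ↔ a.2 = w) := by
      intro a ha
      simp only [Finset.mem_singleton]
      exact ⟨fun h => h.2, fun h => ⟨fun h1 => hloop a ha (h1.trans h.symm), h⟩⟩
    have hEout : (E.filter (fun a => a.1 ∈ ({w} : Finset V) ∧
        a.2 ∉ ({w} : Finset V))).card = 2 := by
      rw [Finset.filter_congr (fun a ha => houtp a ha)]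
      exact (hdeg w).1
    have hEin : (E.filter (fun a => a.1 ∉ ({w} : Finset V) ∧
        a.2 ∈ ({w} : Finset V))).card = 2 := by
      rw [Finset.filter_congr (fun a ha => hinp a ha)]
      exact (hdeg w).2
    set L : List (V × V) := dSteps pl ++ (cs.map cycSteps).flatten with hL
    have hFout : (F.filter (fun a => a.1 ∈ ({w} : Finset V) ∧
        a.2 ∉ ({w} : Finset V))).card = L.countP (fun s => decide (s.1 = w)) := by
      rw [Finset.filter_congr (fun a ha => houtp a (hFE ha))]
      rw [hFeq, stmt7_card_filter_toFinset _ _ hnodup]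
    have hFin : (F.filter (fun a => a.1 ∉ ({w} : Finset V) ∧
        a.2 ∈ ({w} : Finset V))).card = L.countP (fun s => decide (s.2 = w)) := by
      rw [Finset.filter_congr (fun a ha => hinp a (hFE ha))]
      rw [hFeq, stmt7_card_filter_toFinset _ _ hnodup]
    have hflat : ((cs.map cycSteps).flatten).countP (fun s => decide (s.1 = w))
        = ((cs.map cycSteps).flatten).countP (fun s => decide (s.2 = w)) := by
      rw [List.countP_flatten, List.countP_flatten, List.map_map, List.map_map]
      have : (List.countP (fun s => decide (s.1 = w)) ∘ cycSteps)
          = (List.countP (fun s => decide (s.2 = w)) ∘ cycSteps) :=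
        funext fun c => stmt7_cycCount w c
      rw [this]
    have hpath := stmt7_pathCount w pl e.1 e.2 hhead hlast
    have hnat : L.countP (fun s => decide (s.1 = w)) + (if e.2 = w then 1 else 0)
        = L.countP (fun s => decide (s.2 = w)) + (if e.1 = w then 1 else 0) := by
      rw [hL, List.countP_append, List.countP_append, hflat]
      omega
    rw [hEout, hEin, hFout, hFin,
      if_congr (houtp e he) rfl rfl, if_congr (hinp e he) rfl rfl]
    have hnatR : (L.countP (fun s => decide (s.1 = w)) : ℝ)
        + (if e.2 = w then 1 else 0)
        = (L.countP (fun s => decide (s.2 = w)) : ℝ)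
        + (if e.1 = w then 1 else 0) := by
      by_cases h1 : e.1 = w <;> by_cases h2 : e.2 = w <;>
        simp only [h1, h2, if_pos, if_neg, if_true, if_false] at hnat ⊢ <;>
        exact_mod_cast hnat
    by_cases h1 : e.1 = w <;> by_cases h2 : e.2 = w <;>
      simp only [h1, h2, if_true, if_false] at hnatR ⊢ <;> linarith

end TSPGap
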